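/- Let G be a finite group, p a prime, P a Sylow p-subgroup of G, and x ∈ P. Then the subnormalizer Sub_G(x) is generated by the set of elements g ∈ G such that xᵍ ∈ P. -/

import Mathlib

variable {G : Type*} [Group G]

/-- `A` is subnormal in `B`: there is a chain `A = s 0 ⊴ s 1 ⊴ ⋯ ⊴ s n = B`. -/
def IsSubnormalIn (A B : Subgroup G) : Prop :=
  ∃ (n : ℕ) (s : ℕ → Subgroup G), s 0 = A ∧ s n = B ∧
    ∀ i < n, s i ≤ s (i + 1) ∧ ∀ g ∈ s (i + 1), ∀ a ∈ s i, g * a * g⁻¹ ∈ s i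

/-- The subnormaliser `Sub_G(x)` of an element `x`. -/
def subnormalizer (x : G) : Subgroup G :=
  Subgroup.closure
    {g : G | IsSubnormalIn (Subgroup.zpowers x) (Subgroup.closure {g, x})}

open Subgroup

section Aux

lemma isSubnormalIn_refl (A : Subgroup G) : IsSubnormalIn A A :=
  ⟨0, fun _ => A, rfl, rfl, fun i hi => absurd hi (Nat.not_lt_zero i)⟩

lemma IsSubnormalIn.of_normal_left {A B C : Subgroup G} (hAB : A ≤ B)
    (hn : ∀ g ∈ B, ∀ a ∈ A, g * a * g⁻¹ ∈ A) (h : IsSubnormalIn B C) :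
    IsSubnormalIn A C := by
  obtain ⟨n, s, h0, hN, hc⟩ := h
  refine ⟨n + 1, fun i => Nat.casesOn i A s, rfl, hN, ?_⟩
  intro i hi
  cases i with
  | zero =>
    refine ⟨by simpa [h0] using hAB, ?_⟩
    simpa [h0] using hn
  | succ j => exact hc j (by omega)

lemma IsSubnormalIn.trans_normal {A B C : Subgroup G} (h : IsSubnormalIn A B)
    (hBC : B ≤ C) (hn : ∀ g ∈ C, ∀ b ∈ B, g * b * g⁻¹ ∈ B) :
    IsSubnormalIn A C := by
  obtain ⟨n, s, h0, hN, hc⟩ := h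
  refine ⟨n + 1, fun i => if i ≤ n then s i else C, by simpa using h0, by simp, ?_⟩
  intro i hi
  rcases lt_or_eq_of_le (Nat.lt_succ_iff.mp hi) with hlt | heq
  · simp only [Nat.le_of_lt hlt, Nat.succ_le_of_lt hlt, if_pos]
    exact hc i hlt
  · subst heq
    simp only [le_refl, if_pos, Nat.not_succ_le_self, if_neg, hN]
    exact ⟨hBC, hn⟩

lemma IsSubnormalIn.map {H : Type*} [Group H] (f : G →* H) {A B : Subgroup G}
    (h : IsSubnormalIn A B) : IsSubnormalIn (A.map f) (B.map f) := by
  obtain ⟨n, s, h0, hN, hc⟩ := h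
  refine ⟨n, fun i => (s i).map f, by simp only [h0], by simp only [hN], ?_⟩
  intro i hi
  refine ⟨Subgroup.map_mono (hc i hi).1, ?_⟩
  rintro g ⟨g', hg', rfl⟩ a ⟨a', ha', rfl⟩
  refine ⟨g' * a' * g'⁻¹, (hc i hi).2 g' hg' a' ha', by simp⟩

lemma isSubnormalIn_top_of_nilpotent {M : Type*} [Group M] [Finite M]
    [Group.IsNilpotent M] (A : Subgroup M) : IsSubnormalIn A (⊤ : Subgroup M) := by
  have hcard : ∀ {X Y : Subgroup M}, X < Y → Nat.card X < Nat.card Y := by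
    intro X Y hXY
    have h1 : (X : Set M) ⊂ (Y : Set M) := SetLike.coe_ssubset_coe.mpr hXY
    have := Set.ncard_lt_ncard h1 (Set.toFinite _)
    rw [← Nat.card_coe_set_eq, ← Nat.card_coe_set_eq] at this; exact this
  obtain ⟨d, hd⟩ : ∃ d, Nat.card M - Nat.card A ≤ d := ⟨_, le_rfl⟩
  induction d generalizing A with
  | zero =>
    have : A = ⊤ := by
      rcases eq_or_lt_of_le (le_top : A ≤ ⊤) with h | h
      · exact h
      · have h2 := hcard h
        have h3 : Nat.card (⊤ : Subgroup M) = Nat.card M :=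
          Nat.card_congr Subgroup.topEquiv.toEquiv
        omega
    rw [this]; exact isSubnormalIn_refl _
  | succ d ih =>
    rcases eq_or_lt_of_le (le_top : A ≤ ⊤) with h | h
    · rw [h]; exact isSubnormalIn_refl _
    · have hlt : A < Subgroup.normalizer (A : Set M) := normalizerCondition_of_isNilpotent A h
      have hstep : IsSubnormalIn (Subgroup.normalizer (A : Set M)) ⊤ := by
        apply ih
        have := hcard hlt
        have h4 : Nat.card (Subgroup.normalizer (A : Set M)) ≤ Nat.card M :=
          Subgroup.card_le_card_group _
        omega
      refine hstep.of_normal_left hlt.le ?_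
      intro g hg a ha
      exact (Subgroup.mem_normalizer_iff.mp hg a).mp ha

variable {p : ℕ} [Fact p.Prime]

lemma isSubnormalIn_pgroup [Finite G] {K : Subgroup G} (hK : IsPGroup p K)
    {x : G} (hx : x ∈ K) : IsSubnormalIn (zpowers x) K := by
  haveI : Group.IsNilpotent ↥K := hK.isNilpotent
  have h := (isSubnormalIn_top_of_nilpotent (zpowers (⟨x, hx⟩ : K))).map K.subtype
  have h1 : (zpowers (⟨x, hx⟩ : K)).map K.subtype = zpowers x := by
    rw [MonoidHom.map_zpowers]; rfl
  have h2 : (⊤ : Subgroup K).map K.subtype = K := by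
    rw [← MonoidHom.range_eq_map, Subgroup.range_subtype]
  rwa [h1, h2] at h

lemma mem_T_of_normalizer [Finite G] {R : Subgroup G} (hR : IsPGroup p R)
    {x : G} (hx : x ∈ R) {h : G} (hh : h ∈ Subgroup.normalizer (R : Set G)) :
    IsSubnormalIn (zpowers x) (Subgroup.closure {h, x}) := by
  set H := Subgroup.closure ({h, x} : Set G) with hHdef
  have hHN : H ≤ Subgroup.normalizer (R : Set G) := by
    rw [hHdef, closure_le]
    rintro g (rfl | rfl)
    · exact hh
    · exact le_normalizer hx
  have hxH : x ∈ H := subset_closure (Set.mem_insert_of_mem _ rfl)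
  have hsub : IsSubnormalIn (zpowers x) (R ⊓ H) :=
    isSubnormalIn_pgroup (hR.to_inf_left (K := H)) ⟨hx, hxH⟩
  refine hsub.trans_normal inf_le_right ?_
  intro g hg b hb
  exact ⟨(Subgroup.mem_normalizer_iff.mp (hHN hg) b).mp hb.1,
    H.mul_mem (H.mul_mem hg hb.2) (H.inv_mem hg)⟩

lemma normal_le_sylow {M : Type*} [Group M] [Finite M] {H : Subgroup M}
    (h : ∀ m : M, ∀ a ∈ H, m * a * m⁻¹ ∈ H) (hp : IsPGroup p H) (Q : Sylow p M) :
    H ≤ Q.1 := by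
  haveI : Finite (Subgroup M) :=
    Finite.of_injective (fun K : Subgroup M => (K : Set M)) SetLike.coe_injective
  haveI : Finite (Sylow p M) :=
    Finite.of_injective Sylow.toSubgroup (fun P Q h => Sylow.ext h)
  obtain ⟨Q₁, hQ₁⟩ := hp.exists_le_sylow
  obtain ⟨m, hm⟩ := MulAction.exists_smul_eq M Q₁ Q
  intro a ha
  have h1 : m⁻¹ * a * m ∈ Q₁.1 := by
    have := h m⁻¹ a ha
    simpa [mul_assoc] using hQ₁ this
  rw [← hm, Sylow.coe_subgroup_smul, Subgroup.mem_pointwise_smul_iff_inv_smul_mem]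
  simpa [MulAut.smul_def] using h1

open Pointwise in
lemma pgroup_step [Finite G] {N B K' : Subgroup G}
    (hNB : N ≤ B) (hNnB : ∀ b ∈ B, ∀ ν ∈ N, b * ν * b⁻¹ ∈ N)
    (hK'N : K' ≤ N) (hK'nN : ∀ ν ∈ N, ∀ k ∈ K', ν * k * ν⁻¹ ∈ K')
    (hK' : IsPGroup p K') :
    ∃ K : Subgroup G, K' ≤ K ∧ K ≤ B ∧ (∀ b ∈ B, ∀ k ∈ K, b * k * b⁻¹ ∈ K) ∧
      IsPGroup p K := by
  set f : B → Subgroup G := fun b => K'.map (MulAut.conj (b : G)).toMonoidHom with hf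
  have hmemf : ∀ (b : B) (y : G), y ∈ f b ↔ ∃ k ∈ K', (b : G) * k * (b : G)⁻¹ = y := by
    intro b y
    simp [hf, Subgroup.mem_map, MulAut.conj_apply]
  set K : Subgroup G := ⨆ b : B, f b with hKdef
  have hfN : ∀ b : B, f b ≤ N := by
    intro b y hy
    obtain ⟨k, hk, rfl⟩ := (hmemf b y).mp hy
    exact hNnB b b.2 k (hK'N hk)
  have hfK : ∀ b : B, f b ≤ K := fun b => le_iSup f b
  have hK'K : K' ≤ K := by
    refine le_trans ?_ (hfK ⟨1, B.one_mem⟩)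
    intro k hk
    exact (hmemf _ k).mpr ⟨k, hk, by group⟩
  have hKN : K ≤ N := iSup_le hfN
  have hnormB : ∀ b ∈ B, ∀ k ∈ K, b * k * b⁻¹ ∈ K := by
    intro c hc k hk
    rw [hKdef, iSup_eq_closure] at hk
    induction hk using Subgroup.closure_induction with
    | mem a ha =>
      obtain ⟨_, ⟨b, rfl⟩, ha⟩ := ha
      obtain ⟨k', hk', rfl⟩ := (hmemf b a).mp ha
      refine hfK ⟨c * b, B.mul_mem hc b.2⟩ ((hmemf _ _).mpr ⟨k', hk', by group⟩)
    | one => simpa using K.one_mem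
    | mul a a' _ _ iha iha' =>
      have : c * (a * a') * c⁻¹ = (c * a * c⁻¹) * (c * a' * c⁻¹) := by group
      rw [this]; exact K.mul_mem iha iha'
    | inv a _ iha =>
      have : c * a⁻¹ * c⁻¹ = (c * a * c⁻¹)⁻¹ := by group
      rw [this]; exact K.inv_mem iha
  have hfnormN : ∀ b : B, ∀ ν ∈ N, ∀ y ∈ f b, ν * y * ν⁻¹ ∈ f b := by
    intro b ν hν y hy
    obtain ⟨k, hk, rfl⟩ := (hmemf b y).mp hy
    have hb' : (b : G)⁻¹ * ν * (b : G) ∈ N := by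
      have := hNnB _ (B.inv_mem b.2) ν hν
      simpa using this
    refine (hmemf b _).mpr ⟨((b:G)⁻¹ * ν * (b:G)) * k * ((b:G)⁻¹ * ν * (b:G))⁻¹,
      hK'nN _ hb' k hk, by group⟩
  obtain ⟨Q⟩ : Nonempty (Sylow p ↥N) := Sylow.nonempty
  have hfQ : ∀ b : B, f b ≤ Subgroup.map N.subtype Q.1 := by
    intro b
    have hsub : (f b).subgroupOf N ≤ Q.1 := by
      refine normal_le_sylow ?_ ?_ Q
      · rintro ⟨ν, hν⟩ ⟨a, haN⟩ ha
        simp only [Subgroup.mem_subgroupOf] at ha ⊢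
        exact hfnormN b ν hν a ha
      · exact ((hK'.map _).of_equiv (Subgroup.subgroupOfEquivOfLe (hfN b)).symm)
    intro y hy
    exact ⟨⟨y, hfN b hy⟩, hsub (by simpa [Subgroup.mem_subgroupOf] using hy), rfl⟩
  have hKQ : K ≤ Subgroup.map N.subtype Q.1 := iSup_le hfQ
  exact ⟨K, hK'K, le_trans hKN hNB, hnormB, (Q.2.map N.subtype).to_le hKQ⟩

lemma exists_normal_pgroup [Finite G] {A B : Subgroup G}
    (h : IsSubnormalIn A B) (hA : IsPGroup p A) :
    ∃ K : Subgroup G, A ≤ K ∧ K ≤ B ∧ (∀ b ∈ B, ∀ k ∈ K, b * k * b⁻¹ ∈ K) ∧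
      IsPGroup p K := by
  obtain ⟨n, s, h0, hN, hc⟩ := h
  subst hN
  induction n with
  | zero =>
    rw [h0]
    exact ⟨A, le_rfl, le_rfl,
      fun b hb k hk => A.mul_mem (A.mul_mem hb hk) (A.inv_mem hb), hA⟩
  | succ n ih =>
    obtain ⟨K', hAK', hK'N, hK'nN, hK'p⟩ := ih (fun i hi => hc i (by omega))
    obtain ⟨K, hK'K, hKB, hKnB, hKp⟩ :=
      pgroup_step (hc n (by omega)).1 (hc n (by omega)).2 hK'N hK'nN hK'p
    exact ⟨K, hAK'.trans hK'K, hKB, hKnB, hKp⟩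

lemma card_lt_of_lt [Finite G] {A B : Subgroup G} (h : A < B) :
    Nat.card A < Nat.card B := by
  have h1 : (A : Set G) ⊂ (B : Set G) := SetLike.coe_ssubset_coe.mpr h
  have := Set.ncard_lt_ncard h1 (Set.toFinite _)
  rw [← Nat.card_coe_set_eq, ← Nat.card_coe_set_eq] at this; exact this

lemma lt_normalizer_inf [Finite G] {Pg R : Subgroup G} (hPg : IsPGroup p Pg)
    (hR : R < Pg) : R < Subgroup.normalizer (R : Set G) ⊓ Pg := by
  haveI : Group.IsNilpotent ↥Pg := hPg.isNilpotent
  have hRle : R ≤ Pg := hR.le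
  have hA : R.subgroupOf Pg < ⊤ := by
    rcases lt_or_eq_of_le (le_top : R.subgroupOf Pg ≤ ⊤) with h | h
    · exact h
    · exfalso
      have : Pg ≤ R := by
        intro y hy
        have : (⟨y, hy⟩ : Pg) ∈ R.subgroupOf Pg := h ▸ Subgroup.mem_top _
        exact this
      exact absurd (le_antisymm hRle this) (ne_of_lt hR)
  have hlt := normalizerCondition_of_isNilpotent (R.subgroupOf Pg) hA
  obtain ⟨y, hy, hyn⟩ := SetLike.exists_of_lt hlt
  refine lt_of_le_of_ne (le_inf le_normalizer hRle) ?_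
  intro heq
  apply hyn
  have hyN : (y : G) ∈ Subgroup.normalizer (R : Set G) := by
    rw [Subgroup.mem_normalizer_iff]
    intro h
    constructor
    · intro hh
      have := (Subgroup.mem_normalizer_iff.mp hy ⟨h, hRle hh⟩).mp
        (by simpa [Subgroup.mem_subgroupOf] using hh)
      simpa [Subgroup.mem_subgroupOf] using this
    · intro hh
      have hhp : h ∈ Pg := by
        have h1 : (y:G) * h * (y:G)⁻¹ ∈ Pg := hRle hh
        have := Pg.mul_mem (Pg.mul_mem (Pg.inv_mem y.2) h1) y.2
        simpa [mul_assoc] using this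
      have := (Subgroup.mem_normalizer_iff.mp hy ⟨h, hhp⟩).mpr
        (by simpa [Subgroup.mem_subgroupOf] using hh)
      simpa [Subgroup.mem_subgroupOf] using this
  have : (y : G) ∈ Subgroup.normalizer (R : Set G) ⊓ Pg := ⟨hyN, y.2⟩
  rw [← heq] at this
  simpa [Subgroup.mem_subgroupOf] using this

open Pointwise in
lemma sylow_conn [Fintype G] (x : G) (μ : ℕ) :
    ∀ P' Q' : Sylow p G, x ∈ P'.1 → x ∈ Q'.1 →
      Fintype.card G - Nat.card (P'.1 ⊓ Q'.1 : Subgroup G) ≤ μ →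
      ∃ w ∈ subnormalizer x, w • P' = Q' := by
  induction μ with
  | zero =>
    intro P' Q' hxP hxQ hμ
    have hle : Nat.card (P'.1 ⊓ Q'.1 : Subgroup G) ≤ Fintype.card G := by
      have := Subgroup.card_le_card_group (P'.1 ⊓ Q'.1)
      simpa [Nat.card_eq_fintype_card] using this
    have hcard : Nat.card (P'.1 ⊓ Q'.1 : Subgroup G) = Fintype.card G := by omega
    have htop : P'.1 ⊓ Q'.1 = ⊤ := by
      by_contra hne
      have : P'.1 ⊓ Q'.1 < ⊤ := lt_of_le_of_ne le_top hne
      have := card_lt_of_lt this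
      have h2 : Nat.card (⊤ : Subgroup G) = Fintype.card G := by
        rw [Nat.card_congr Subgroup.topEquiv.toEquiv, Nat.card_eq_fintype_card]
      omega
    have hPQ : P' = Q' := by
      apply Sylow.ext
      have h1 : (⊤ : Subgroup G) ≤ P'.1 := le_of_eq_of_le htop.symm inf_le_left
      have h2 : (⊤ : Subgroup G) ≤ Q'.1 := le_of_eq_of_le htop.symm inf_le_right
      exact le_antisymm (le_trans le_top h2) (le_trans le_top h1)
    exact ⟨1, (subnormalizer x).one_mem, by rw [one_smul, hPQ]⟩
  | succ μ ih =>
    intro P' Q' hxP hxQ hμ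
    by_cases hPQ : P'.1 ≤ Q'.1
    · have : Q'.1 = P'.1 := P'.3 Q'.2 hPQ
      have : P' = Q' := Sylow.ext this.symm
      exact ⟨1, (subnormalizer x).one_mem, by rw [one_smul, this]⟩
    · set R : Subgroup G := P'.1 ⊓ Q'.1 with hRdef
      have hxR : x ∈ R := ⟨hxP, hxQ⟩
      have hRP : R < P'.1 := by
        refine lt_of_le_of_ne inf_le_left ?_
        intro h; exact hPQ (h ▸ inf_le_right)
      have hRQ : R < Q'.1 := by
        refine lt_of_le_of_ne inf_le_right ?_
        intro h
        have hQP : Q'.1 ≤ P'.1 := h ▸ inf_le_left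
        exact hPQ (le_of_eq (Q'.3 P'.2 hQP))
      have hRp : IsPGroup p R := P'.2.to_le hRP.le
      set N : Subgroup G := Subgroup.normalizer (R : Set G) with hNdef
      set V : Subgroup G := Subgroup.normalizer (R : Set G) ⊓ P'.1 with hVdef
      set U : Subgroup G := Subgroup.normalizer (R : Set G) ⊓ Q'.1 with hUdef
      have hRV : R < V := lt_normalizer_inf P'.2 hRP
      have hRU : R < U := lt_normalizer_inf Q'.2 hRQ
      have hVN : V ≤ N := inf_le_left
      have hUN : U ≤ N := inf_le_left
      haveI : Finite (Subgroup G) :=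
        Finite.of_injective (fun K : Subgroup G => (K : Set G)) SetLike.coe_injective
      haveI : Finite (Sylow p G) :=
        Finite.of_injective Sylow.toSubgroup (fun P Q h => Sylow.ext h)
      have hVp : IsPGroup p ↥(V.subgroupOf N) :=
        ((P'.2.to_le inf_le_right).of_equiv (Subgroup.subgroupOfEquivOfLe hVN).symm)
      have hUp : IsPGroup p ↥(U.subgroupOf N) :=
        ((Q'.2.to_le inf_le_right).of_equiv (Subgroup.subgroupOfEquivOfLe hUN).symm)
      obtain ⟨W, hVW⟩ := hVp.exists_le_sylow
      obtain ⟨W₁, hUW₁⟩ := hUp.exists_le_sylow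
      obtain ⟨n', hn'⟩ := MulAction.exists_smul_eq ↥N W₁ W
      set n : G := (n' : G) with hndef
      have hnN : n ∈ N := n'.2
      have hnT : n ∈ subnormalizer x :=
        Subgroup.subset_closure (mem_T_of_normalizer hRp hxR hnN)
      set Q'' : Sylow p G := n • Q' with hQ''def
      have hxQ'' : x ∈ Q''.1 := by
        rw [hQ''def, Sylow.coe_subgroup_smul,
          Subgroup.mem_pointwise_smul_iff_inv_smul_mem]
        have h3 : n⁻¹ * x * (n⁻¹)⁻¹ ∈ R :=
          (Subgroup.mem_normalizer_iff.mp (N.inv_mem hnN) x).mp hxR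
        have h4 : n⁻¹ * x * n ∈ Q'.1 := hRQ.le (by simpa using h3)
        simpa [MulAut.smul_def] using h4
      obtain ⟨P₁, hWP₁⟩ := (W.2.map N.subtype).exists_le_sylow
      have hVmap : V ≤ Subgroup.map N.subtype W.1 := by
        intro v hv
        exact ⟨⟨v, hVN hv⟩, hVW (by simpa [Subgroup.mem_subgroupOf] using hv), rfl⟩
      have hxV : x ∈ V := hRV.le hxR
      have hxP₁ : x ∈ P₁.1 := hWP₁ (hVmap hxV)
      have hVinf : V ≤ P'.1 ⊓ P₁.1 := le_inf inf_le_right (hVmap.trans hWP₁)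
      have hcard1 : Nat.card R < Nat.card (P'.1 ⊓ P₁.1 : Subgroup G) :=
        lt_of_lt_of_le (card_lt_of_lt hRV) (Subgroup.card_le_of_le hVinf)
      have hcardle : ∀ (X : Subgroup G), Nat.card X ≤ Fintype.card G := by
        intro X
        have := Subgroup.card_le_card_group X
        simpa [Nat.card_eq_fintype_card] using this
      obtain ⟨w₁, hw₁T, hw₁⟩ := ih P' P₁ hxP hxP₁ (by
        have := hcardle (P'.1 ⊓ P₁.1); omega)
      set nU : Subgroup G := U.map (MulAut.conj n).toMonoidHom with hnUdef
      have hnUcard : Nat.card nU = Nat.card U :=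
        (Nat.card_congr (Subgroup.equivMapOfInjective U _
          (MulAut.conj n).injective).toEquiv).symm
      have hnUinf : nU ≤ Q''.1 ⊓ P₁.1 := by
        rintro _ ⟨u, hu, rfl⟩
        constructor
        · rw [hQ''def, Sylow.coe_subgroup_smul]
          exact Subgroup.smul_mem_pointwise_smul u (MulAut.conj n) Q'.1 (hUdef ▸ hu).2
        · apply hWP₁
          have huN : (⟨u, hUN hu⟩ : ↥N) ∈ U.subgroupOf N := by
            simpa [Subgroup.mem_subgroupOf] using hu
          have h5 : MulAut.conj n' • (⟨u, hUN hu⟩ : ↥N) ∈ (n' • W₁ : Sylow p ↥N).1 := by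
            rw [Sylow.coe_subgroup_smul]
            exact Subgroup.smul_mem_pointwise_smul _ (MulAut.conj n') W₁.1 (hUW₁ huN)
          rw [hn'] at h5
          exact ⟨_, h5, rfl⟩
      have hcard2 : Nat.card R < Nat.card (Q''.1 ⊓ P₁.1 : Subgroup G) := by
        calc Nat.card R < Nat.card U := card_lt_of_lt hRU
        _ = Nat.card nU := hnUcard.symm
        _ ≤ _ := Subgroup.card_le_of_le hnUinf
      have hcard3 : Nat.card R = Nat.card (P'.1 ⊓ Q'.1 : Subgroup G) := rfl
      obtain ⟨w₂, hw₂T, hw₂⟩ := ih Q'' P₁ hxQ'' hxP₁ (by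
        have := hcardle (Q''.1 ⊓ P₁.1); omega)
      refine ⟨n⁻¹ * (w₂⁻¹ * w₁), mul_mem (inv_mem hnT)
        (mul_mem (inv_mem hw₂T) hw₁T), ?_⟩
      rw [mul_smul, mul_smul, hw₁, ← hw₂, inv_smul_smul, hQ''def, inv_smul_smul]

end Aux

open Pointwise in
theorem stmt_9 [Fintype G] {p : ℕ} (hp : p.Prime)
    (P : Sylow p G) (x : G) (hx : x ∈ P) :
    subnormalizer x = Subgroup.closure {g : G | g⁻¹ * x * g ∈ P} := by
  haveI := Fact.mk hp
  haveI : Finite (Subgroup G) :=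
    Finite.of_injective (fun K : Subgroup G => (K : Set G)) SetLike.coe_injective
  haveI : Finite (Sylow p G) :=
    Finite.of_injective Sylow.toSubgroup (fun P Q h => Sylow.ext h)
  apply le_antisymm
  · rw [subnormalizer]
    rw [Subgroup.closure_le]
    intro g hg
    have hzp : IsPGroup p (zpowers x) := P.2.to_le (Subgroup.zpowers_le.mpr hx)
    obtain ⟨K, hAK, hKB, hKn, hKp⟩ := exists_normal_pgroup hg hzp
    obtain ⟨Q, hKQ⟩ := hKp.exists_le_sylow
    have hxK : x ∈ K := hAK (Subgroup.mem_zpowers x)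
    have hgH : g ∈ Subgroup.closure ({g, x} : Set G) :=
      Subgroup.subset_closure (Set.mem_insert _ _)
    have hxg : g⁻¹ * x * g ∈ K := by
      simpa using hKn g⁻¹ (inv_mem hgH) x hxK
    obtain ⟨k, hk⟩ := MulAction.exists_smul_eq G Q P
    have hmem : ∀ y : G, y ∈ Q.1 → k * y * k⁻¹ ∈ P.1 := by
      intro y hy
      rw [← hk, Sylow.coe_subgroup_smul]
      exact Subgroup.smul_mem_pointwise_smul y (MulAut.conj k) Q.1 hy
    have h1 : k⁻¹ ∈ {g : G | g⁻¹ * x * g ∈ P} := by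
      have := hmem x (hKQ hxK)
      simp only [Set.mem_setOf_eq, inv_inv]; exact this
    have h2 : g * k⁻¹ ∈ {g : G | g⁻¹ * x * g ∈ P} := by
      have := hmem (g⁻¹ * x * g) (hKQ hxg)
      show (g * k⁻¹)⁻¹ * x * (g * k⁻¹) ∈ P.1
      have heq : (g * k⁻¹)⁻¹ * x * (g * k⁻¹) = k * (g⁻¹ * x * g) * k⁻¹ := by group
      rwa [heq]
    have hgeq : g = (g * k⁻¹) * (k⁻¹)⁻¹ := by group
    rw [hgeq]
    exact mul_mem (Subgroup.subset_closure h2)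
      (inv_mem (Subgroup.subset_closure h1))
  · rw [Subgroup.closure_le]
    intro g hg
    have hg' : g⁻¹ * x * g ∈ P.1 := hg
    set Q : Sylow p G := g • P with hQdef
    have hxQ : x ∈ Q.1 := by
      rw [hQdef, Sylow.coe_subgroup_smul]
      have := Subgroup.smul_mem_pointwise_smul _ (MulAut.conj g) P.1 hg'
      simpa [MulAut.smul_def, mul_assoc] using this
    obtain ⟨w, hwT, hw⟩ :=
      sylow_conn x (Fintype.card G) P Q hx hxQ (Nat.sub_le _ _)
    have hnorm : (w⁻¹ * g) • P = P := by
      rw [mul_smul, ← hQdef, ← hw, inv_smul_smul]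
    have hmemN : w⁻¹ * g ∈ Subgroup.normalizer ((P : Subgroup G) : Set G) :=
      Sylow.smul_eq_iff_mem_normalizer.mp hnorm
    have hT : w⁻¹ * g ∈ subnormalizer x :=
      Subgroup.subset_closure (mem_T_of_normalizer P.2 hx hmemN)
    have hgeq : g = w * (w⁻¹ * g) := by group
    rw [hgeq]
    exact mul_mem hwT hT
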